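/- Let N ≥ 1 and let A and B be N×N matrices over a commutative ring R in which N·1 is invertible (e.g. R = ℝ). Then det(1_N + A·B) equals the sum, over all N^N functions k : {1,…,N} → {1,…,N}, of det(M_k), where M_k is the N×N matrix with entries (M_k)_{mn} = (1/N)·δ_{mn} + A_{k(m),m} · B_{m,k(n)} (no summation over m in this entry). -/

import Mathlib

open Matrix Finset

private lemma minor_det {N : ℕ} {R : Type*} [CommRing R] (r : Fin N → Bool)
    (X Y : Matrix (Fin N) (Fin N) R)
    (hX : ∀ m n, r m = true → X m n = if m = n then 1 else 0)
    (hY : ∀ m n, r m = true → Y m n = if m = n then 1 else 0)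
    (hXY : ∀ m n, r m = false → r n = false → X m n = Y m n) :
    X.det = Y.det := by
  rw [det_apply, det_apply]
  refine Finset.sum_congr rfl fun σ _ => ?_
  congr 1
  by_cases h : ∀ n, r (σ n) = true → σ n = n
  · have hfix : ∀ i, r i = true → σ i = i := by
      intro i hi
      have h2 := h (σ⁻¹ i)
      rw [(Equiv.Perm.eq_inv_iff_eq (f := σ) (x := σ⁻¹ i) (y := i)).mp rfl] at h2
      have h3 := h2 hi
      exact (congrArg σ h3.symm).symm.trans ((Equiv.Perm.eq_inv_iff_eq (f := σ) (x := σ⁻¹ i) (y := i)).mp rfl)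
    refine Finset.prod_congr rfl fun i _ => ?_
    cases hri : r i with
    | true =>
        have hs : σ i = i := hfix i hri
        rw [hs, hX i i hri, hY i i hri]
    | false =>
        have hσi : r (σ i) = false := by
          cases h' : r (σ i) with
          | false => rfl
          | true =>
              have h4 := h i h'
              rw [h4] at h'
              rw [h'] at hri
              exact absurd hri (by simp)
        exact hXY _ _ hσi hri
  · push_neg at h
    obtain ⟨n, hn, hne⟩ := h
    rw [Finset.prod_eq_zero (Finset.mem_univ n) (by rw [hX _ _ hn, if_neg hne]),
      Finset.prod_eq_zero (Finset.mem_univ n) (by rw [hY _ _ hn, if_neg hne])]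

set_option maxHeartbeats 2000000 in
theorem full_determinant_expansion
    (N : ℕ) (hN : 1 ≤ N) (R : Type*) [CommRing R] [Invertible (N : R)]
    (A B : Matrix (Fin N) (Fin N) R) :
    (1 + A * B).det =
      ∑ k : Fin N → Fin N,
        (Matrix.of fun m n : Fin N =>
          (if m = n then ⅟(N : R) else 0) + A (k m) m * B m (k n)).det := by
  classical
  set f := (detRowAlternating : (Fin N → R) [⋀^Fin N]→ₗ[R] R).toMultilinearMap with hf
  have hdet : ∀ M : Matrix (Fin N) (Fin N) R, M.det = f (fun m => M m) := fun M => rfl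
  set c : (Fin N → Bool) → Fin N → Fin N → R :=
    fun r n i => if r n then ⅟(N : R) else A i n with hc
  set E : (Fin N → Bool) → (Fin N → Fin N) → Matrix (Fin N) (Fin N) R :=
    fun r k => Matrix.of fun m n =>
      if r m then (if m = n then (1 : R) else 0) else B m (k n) with hE
  set colv : (Fin N → Bool) → Fin N → Fin N → (Fin N → R) :=
    fun r n i m => if r m then (if m = n then (1 : R) else 0) else B m i with hcolv
  set W : (Fin N → Bool) → Matrix (Fin N) (Fin N) R :=
    fun r => Matrix.of fun m n =>
      if r m then (if m = n then (1 : R) else 0) else ∑ i, c r n i * B m i with hW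
  set H : (Fin N → Bool) → Matrix (Fin N) (Fin N) R :=
    fun r => Matrix.of fun m n =>
      if r m then (if m = n then (1 : R) else 0) else (B * A) m n with hH
  -- Claim 1: row expansion of each det M_k
  have claim1 : ∀ k : Fin N → Fin N,
      (Matrix.of fun m n : Fin N =>
          (if m = n then ⅟(N : R) else 0) + A (k m) m * B m (k n)).det
      = ∑ r : Fin N → Bool, (∏ n, c r n (k n)) * (E r k).det := by
    intro k
    have h1 : (fun m => (Matrix.of fun m n : Fin N =>
          (if m = n then ⅟(N : R) else 0) + A (k m) m * B m (k n)) m)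
        = fun m => ∑ b : Bool,
          (if b then (fun n => if m = n then ⅟(N : R) else 0)
           else (fun n => A (k m) m * B m (k n))) := by
      funext m
      rw [Fintype.sum_bool]
      funext n
      simp [add_comm]
    rw [hdet, h1, f.map_sum]
    refine Finset.sum_congr rfl fun r _ => ?_
    have h2 : (fun m => (if r m then (fun n => if m = n then ⅟(N : R) else 0)
           else (fun n => A (k m) m * B m (k n))))
        = fun m => c r m (k m) • (E r k m) := by
      funext m
      cases hrm : r m with
      | true => funext n; simp [hc, hE, hrm, mul_ite]
      | false => funext n; simp [hc, hE, hrm]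
    rw [h2, f.map_smul_univ (fun m => c r m (k m)) (fun m => (E r k m : Fin N → R)), smul_eq_mul, hdet (E r k)]
  -- Claim 2: column expansion over k, for fixed r
  have claim2 : ∀ r : Fin N → Bool,
      (∑ k : Fin N → Fin N, (∏ n, c r n (k n)) * (E r k).det) = (W r).det := by
    intro r
    have colstep : ∀ k : Fin N → Fin N,
        (∏ n, c r n (k n)) * (E r k).det
          = f (fun n => (fun i => c r n i • colv r n i) (k n)) := by
      intro k
      have hT : (E r k).det = f (fun n => colv r n (k n)) := by
        rw [← det_transpose, hdet]
        congr 1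
      rw [hT, ← smul_eq_mul]
      exact (f.map_smul_univ _ _).symm
    calc (∑ k : Fin N → Fin N, (∏ n, c r n (k n)) * (E r k).det)
        = ∑ k : Fin N → Fin N, f (fun n => (fun i => c r n i • colv r n i) (k n)) :=
          Finset.sum_congr rfl fun k _ => colstep k
      _ = f (fun n => ∑ i, c r n i • colv r n i) := (f.map_sum (α := fun _ : Fin N => Fin N) (fun n i => c r n i • colv r n i)).symm
      _ = (W r).det := by
          rw [← det_transpose (W r), hdet]
          congr 1
          funext n m
          simp only [transpose_apply, hW, Matrix.of_apply, Finset.sum_apply, Pi.smul_apply,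
            smul_eq_mul, hcolv]
          cases hrm : r m with
          | true =>
              by_cases hmn : m = n
              · subst hmn
                simp [hrm, hc, Finset.sum_const, Finset.card_univ, nsmul_eq_mul]
              · simp [hrm, hmn, Ne.symm hmn]
          | false =>
              simp [hrm]
  -- Claim 3: W r and H r have the same determinant
  have claim3 : ∀ r : Fin N → Bool, (W r).det = (H r).det := by
    intro r
    refine minor_det r (W r) (H r) ?_ ?_ ?_
    · intro m n hm; simp [hW, hm]
    · intro m n hm; simp [hH, hm]
    · intro m n hm hn
      simp only [hW, hH, Matrix.of_apply, hm, if_false, hc, hn, Bool.false_eq_true, mul_apply]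
      exact Finset.sum_congr rfl fun i _ => mul_comm _ _
  -- Claim 4: summing over r recovers det (1 + B * A)
  have claim4 : (∑ r : Fin N → Bool, (H r).det) = (1 + B * A).det := by
    have h1 : (fun m => (1 + B * A) m)
        = fun m => ∑ b : Bool,
          (if b then (fun n => if m = n then (1 : R) else 0) else (B * A) m) := by
      funext m
      rw [Fintype.sum_bool]
      funext n
      simp [Matrix.add_apply, Matrix.one_apply, add_comm]
    rw [hdet (1 + B * A), h1, f.map_sum]
    refine Finset.sum_congr rfl fun r _ => ?_
    rw [hdet (H r)]
    congr 1
    funext m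
    cases hrm : r m with
    | true => funext n; simp [hH, hrm]
    | false => funext n; simp [hH, hrm]
  calc (1 + A * B).det = (1 + B * A).det := det_one_add_mul_comm A B
    _ = ∑ r : Fin N → Bool, (H r).det := claim4.symm
    _ = ∑ r : Fin N → Bool, (W r).det := by
        exact Finset.sum_congr rfl fun r _ => (claim3 r).symm
    _ = ∑ r : Fin N → Bool, ∑ k : Fin N → Fin N, (∏ n, c r n (k n)) * (E r k).det := by
        exact Finset.sum_congr rfl fun r _ => (claim2 r).symm
    _ = ∑ k : Fin N → Fin N, ∑ r : Fin N → Bool, (∏ n, c r n (k n)) * (E r k).det :=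
        Finset.sum_comm
    _ = ∑ k : Fin N → Fin N,
        (Matrix.of fun m n : Fin N =>
          (if m = n then ⅟(N : R) else 0) + A (k m) m * B m (k n)).det :=
        Finset.sum_congr rfl fun k _ => (claim1 k).symm
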